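/- Let d ≥ 2 and k ≥ 2. There exist k pairwise complementary partitions of a set with d² elements if and only if there exist k − 2 pairwise orthogonal Latin squares of order d. (Equivalently, there are k mutually complementary classical structures on a set with d² elements in Rel if and only if there exist k − 2 mutually orthogonal d × d Latin squares.) -/

import Mathlib

/-- `π` is a partition of `X`: a collection of nonempty pairwise disjoint subsets of `X`
whose union is all of `X`. -/
def IsPartition {X : Type*} (π : Set (Set X)) : Prop :=
  (∀ S ∈ π, S.Nonempty) ∧ (∀ S ∈ π, ∀ T ∈ π, S ≠ T → Disjoint S T) ∧ ⋃₀ π = Set.univ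

/-- Two partitions are complementary if every part of one meets every part of the other
in exactly one element. -/
def Complementary {X : Type*} (π τ : Set (Set X)) : Prop :=
  ∀ S ∈ π, ∀ T ∈ τ, ∃! x, x ∈ S ∩ T

/-- A Latin square of order `d`: every row and every column is a bijection. -/
def IsLatinSquare {d : ℕ} (L : Fin d → Fin d → Fin d) : Prop :=
  (∀ i, Function.Bijective fun j => L i j) ∧ (∀ j, Function.Bijective fun i => L i j)

/-- Two Latin squares of order `d` are orthogonal if the map
`(i, j) ↦ (L i j, L' i j)` is injective. -/
def OrthogonalLS {d : ℕ} (L L' : Fin d → Fin d → Fin d) : Prop :=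
  Function.Injective fun p : Fin d × Fin d => (L p.1 p.2, L' p.1 p.2)

open Function


lemma isPartition_fibers {X C : Type*} {f : X → C} (hf : Surjective f) :
    IsPartition (Set.range fun c => f ⁻¹' {c}) := by
  refine ⟨?_, ?_, ?_⟩
  · rintro S ⟨c, rfl⟩
    obtain ⟨x, hx⟩ := hf c
    exact ⟨x, hx⟩
  · rintro S ⟨c, rfl⟩ T ⟨c', rfl⟩ hne
    have hcc : c ≠ c' := by rintro rfl; exact hne rfl
    rw [Set.disjoint_left]
    rintro x hx hx'
    simp only [Set.mem_preimage, Set.mem_singleton_iff] at hx hx'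
    exact hcc (hx.symm.trans hx')
  · ext x
    simp only [Set.mem_sUnion, Set.mem_univ, iff_true]
    exact ⟨f ⁻¹' {f x}, ⟨f x, rfl⟩, rfl⟩

lemma complementary_fibers {X C C' : Type*} {f : X → C} {g : X → C'}
    (h : Bijective fun x => (f x, g x)) :
    Complementary (Set.range fun c => f ⁻¹' {c}) (Set.range fun c => g ⁻¹' {c}) := by
  rintro S ⟨c, rfl⟩ T ⟨c', rfl⟩
  obtain ⟨x, hx⟩ := h.2 (c, c')
  simp only [Prod.mk.injEq] at hx
  refine ⟨x, ⟨hx.1, hx.2⟩, ?_⟩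
  intro y hy
  simp only [Set.mem_inter_iff, Set.mem_preimage, Set.mem_singleton_iff] at hy
  apply h.1
  simp only [Prod.mk.injEq]
  exact ⟨hy.1.trans hx.1.symm, hy.2.trans hx.2.symm⟩

lemma Complementary.symm' {X : Type*} {π τ : Set (Set X)} (h : Complementary π τ) :
    Complementary τ π := by
  intro T hT S hS
  simpa [Set.inter_comm] using h S hS T hT


lemma mols_forward {d k : ℕ} (hd : 2 ≤ d) (hk3 : 3 ≤ k) {X : Type*} [Fintype X]
    (hX : Fintype.card X = d ^ 2)
    (π : Fin k → Set (Set X)) (hpart : ∀ i, IsPartition (π i))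
    (hcomp : ∀ i j, i ≠ j → Complementary (π i) (π j)) :
    ∃ L : Fin (k - 2) → Fin d → Fin d → Fin d,
      (∀ i, IsLatinSquare (L i)) ∧ ∀ i j, i ≠ j → OrthogonalLS (L i) (L j) := by
  classical
  -- unique part containing each point
  have huniq : ∀ (i : Fin k) (x : X),
      ∃ S, (S ∈ π i ∧ x ∈ S) ∧ ∀ T, T ∈ π i → x ∈ T → T = S := by
    intro i x
    obtain ⟨S, hS, hxS⟩ : ∃ S ∈ π i, x ∈ S := by
      have h := (hpart i).2.2
      have hx : x ∈ ⋃₀ π i := h ▸ Set.mem_univ x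
      simpa using hx
    refine ⟨S, ⟨hS, hxS⟩, fun T hT hxT => ?_⟩
    by_contra hne
    exact Set.disjoint_left.mp ((hpart i).2.1 T hT S hS hne) hxT hxS
  choose P hP using huniq
  have hPmem : ∀ i x, P i x ∈ π i := fun i x => (hP i x).1.1
  have hPx : ∀ i x, x ∈ P i x := fun i x => (hP i x).1.2
  have hPu : ∀ i x S, S ∈ π i → x ∈ S → S = P i x := fun i x S h1 h2 => (hP i x).2 S h1 h2
  -- uniqueness of points from complementarity
  have hptuniq : ∀ {i j : Fin k}, i ≠ j → ∀ {x y : X},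
      P i x = P i y → P j x = P j y → x = y := by
    intro i j hij x y h1 h2
    obtain ⟨z, hz, hzu⟩ := hcomp i j hij (P i x) (hPmem i x) (P j x) (hPmem j x)
    have hx : x ∈ P i x ∩ P j x := ⟨hPx i x, hPx j x⟩
    have hy : y ∈ P i x ∩ P j x := ⟨by rw [h1]; exact hPx i y, by rw [h2]; exact hPx j y⟩
    exact (hzu x hx).trans (hzu y hy).symm
  -- bijectivity of the pairing map into parts
  have hbij : ∀ {i j : Fin k}, i ≠ j → Function.Bijective
      (fun x : X => ((⟨P i x, hPmem i x⟩ : π i), (⟨P j x, hPmem j x⟩ : π j))) := by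
    intro i j hij
    constructor
    · intro x y hxy
      simp only [Prod.mk.injEq, Subtype.mk.injEq] at hxy
      exact hptuniq hij hxy.1 hxy.2
    · rintro ⟨⟨S, hS⟩, ⟨T, hT⟩⟩
      obtain ⟨x, ⟨hxS, hxT⟩, -⟩ := hcomp i j hij S hS T hT
      refine ⟨x, ?_⟩
      simp only [Prod.mk.injEq, Subtype.mk.injEq]
      exact ⟨(hPu i x S hS hxS).symm, (hPu j x T hT hxT).symm⟩
  have hcardprod : ∀ {i j : Fin k}, i ≠ j →
      Nat.card (π i) * Nat.card (π j) = d ^ 2 := by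
    intro i j hij
    have h := Nat.card_eq_of_bijective _ (hbij hij)
    rw [Nat.card_prod] at h
    rw [← h, Nat.card_eq_fintype_card, hX]
  -- distinguished indices
  set i0 : Fin k := ⟨0, by omega⟩ with hi0
  set i1 : Fin k := ⟨1, by omega⟩ with hi1
  set i2 : Fin k := ⟨2, by omega⟩ with hi2
  have h01 : i0 ≠ i1 := by simp [hi0, hi1, Fin.ext_iff]
  have h02 : i0 ≠ i2 := by simp [hi0, hi2, Fin.ext_iff]
  have h12 : i1 ≠ i2 := by simp [hi1, hi2, Fin.ext_iff]
  -- all partitions have d parts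
  have hcard : ∀ i : Fin k, Nat.card (π i) = d := by
    have p01 := hcardprod h01
    have p02 := hcardprod h02
    have p12 := hcardprod h12
    set a := Nat.card (π i0)
    set b := Nat.card (π i1)
    set c := Nat.card (π i2)
    have hd2 : d ^ 2 = d * d := sq d
    rw [hd2] at p01 p02 p12
    have ha0 : 0 < a := by
      rcases Nat.eq_zero_or_pos a with h | h
      · rw [h, zero_mul] at p01
        exact absurd p01.symm (Nat.mul_ne_zero (by omega) (by omega))
      · exact h
    have hbc : b = c := Nat.eq_of_mul_eq_mul_left ha0 (p01.trans p02.symm)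
    have hbd : b = d := by
      have : b * b = d * d := by rw [hbc] at p01 ⊢; exact hbc ▸ p12
      exact Nat.mul_self_inj.mp this
    have had : a = d := by
      have hd0 : 0 < d := by omega
      have := p01
      rw [hbd] at this
      exact Nat.eq_of_mul_eq_mul_right hd0 this
    intro i
    by_cases hia : i = i0
    · rw [hia]; exact had
    · have had' : Nat.card ↑(π i0) = d := had
      have := hcardprod (Ne.symm hia)
      rw [hd2, had'] at this
      exact Nat.eq_of_mul_eq_mul_left (by omega) this
  -- equivs to Fin d
  have E : ∀ i : Fin k, π i ≃ Fin d := fun i =>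
    (Finite.equivFinOfCardEq (hcard i))
  -- the coordinate equivalence
  let e01 : X ≃ (π i0 × π i1) := Equiv.ofBijective _ (hbij h01)
  let Φ : X ≃ Fin d × Fin d := e01.trans ((E i0).prodCongr (E i1))
  have hΦ1 : ∀ x : X, (Φ x).1 = E i0 ⟨P i0 x, hPmem i0 x⟩ := fun x => rfl
  have hΦ2 : ∀ x : X, (Φ x).2 = E i1 ⟨P i1 x, hPmem i1 x⟩ := fun x => rfl
  let ι : Fin (k - 2) → Fin k := fun m => ⟨(m : ℕ) + 2, by have := m.2; omega⟩
  have hι0 : ∀ m, ι m ≠ i0 := fun m => by simp [ι, hi0, Fin.ext_iff]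
  have hι1 : ∀ m, ι m ≠ i1 := fun m => by simp [ι, hi1, Fin.ext_iff]
  have hιinj : ∀ {m m'}, m ≠ m' → ι m ≠ ι m' := by
    intro m m' h hcon
    exact h (Fin.ext (by simpa [ι, Fin.ext_iff] using hcon))
  refine ⟨fun m a b => E (ι m) ⟨P (ι m) (Φ.symm (a, b)), hPmem _ _⟩, ?_, ?_⟩
  · -- Latin squares
    intro m
    constructor
    · intro a
      rw [← Finite.injective_iff_bijective]
      intro b b' h
      have hPm : P (ι m) (Φ.symm (a, b)) = P (ι m) (Φ.symm (a, b')) :=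
        Subtype.ext_iff.mp ((E (ι m)).injective h)
      have hP0 : P i0 (Φ.symm (a, b)) = P i0 (Φ.symm (a, b')) := by
        have e1 : E i0 ⟨P i0 (Φ.symm (a, b)), hPmem _ _⟩ = a := by
          rw [← hΦ1]; simp
        have e2 : E i0 ⟨P i0 (Φ.symm (a, b')), hPmem _ _⟩ = a := by
          rw [← hΦ1]; simp
        exact Subtype.ext_iff.mp ((E i0).injective (e1.trans e2.symm))
      have := hptuniq (hι0 m).symm hP0 hPm
      have := Φ.symm.injective this
      exact (Prod.mk.injEq .. ▸ this).2
    · intro b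
      rw [← Finite.injective_iff_bijective]
      intro a a' h
      have hPm : P (ι m) (Φ.symm (a, b)) = P (ι m) (Φ.symm (a', b)) :=
        Subtype.ext_iff.mp ((E (ι m)).injective h)
      have hP1 : P i1 (Φ.symm (a, b)) = P i1 (Φ.symm (a', b)) := by
        have e1 : E i1 ⟨P i1 (Φ.symm (a, b)), hPmem _ _⟩ = b := by
          rw [← hΦ2]; simp
        have e2 : E i1 ⟨P i1 (Φ.symm (a', b)), hPmem _ _⟩ = b := by
          rw [← hΦ2]; simp
        exact Subtype.ext_iff.mp ((E i1).injective (e1.trans e2.symm))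
      have := hptuniq (hι1 m).symm hP1 hPm
      have := Φ.symm.injective this
      exact (Prod.mk.injEq .. ▸ this).1
  · -- orthogonality
    intro m m' hmm
    intro p q hpq
    simp only [Prod.mk.injEq] at hpq
    have h1 : P (ι m) (Φ.symm (p.1, p.2)) = P (ι m) (Φ.symm (q.1, q.2)) :=
      Subtype.ext_iff.mp ((E (ι m)).injective hpq.1)
    have h2 : P (ι m') (Φ.symm (p.1, p.2)) = P (ι m') (Φ.symm (q.1, q.2)) :=
      Subtype.ext_iff.mp ((E (ι m')).injective hpq.2)
    have := hptuniq (hιinj hmm) h1 h2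
    have := Φ.symm.injective this
    simpa using this

lemma mols_backward {d k : ℕ} (hd : 2 ≤ d) (hk : 2 ≤ k) {X : Type*} [Fintype X]
    (hX : Fintype.card X = d ^ 2)
    (L : Fin (k - 2) → Fin d → Fin d → Fin d)
    (hL : ∀ i, IsLatinSquare (L i)) (hLL : ∀ i j, i ≠ j → OrthogonalLS (L i) (L j)) :
    ∃ π : Fin k → Set (Set X),
      (∀ i, IsPartition (π i)) ∧ ∀ i j, i ≠ j → Complementary (π i) (π j) := by
  classical
  have hd0 : 0 < d := by omega
  have hcard : Fintype.card X = Fintype.card (Fin d × Fin d) := by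
    simp [hX, sq]
  let e : X ≃ Fin d × Fin d := Fintype.equivOfCardEq hcard
  let G : Fin k → Fin d × Fin d → Fin d := fun i p =>
    if h0 : (i : ℕ) = 0 then p.1
    else if h1 : (i : ℕ) = 1 then p.2
    else L ⟨(i : ℕ) - 2, by have := i.2; omega⟩ p.1 p.2
  -- each G i is surjective
  have hGsurj : ∀ i, Surjective (G i) := by
    intro i c
    by_cases h0 : (i : ℕ) = 0
    · exact ⟨(c, c), by simp [G, h0]⟩
    · by_cases h1 : (i : ℕ) = 1
      · exact ⟨(c, c), by simp [G, h0, h1]⟩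
      · obtain ⟨b, hb⟩ := ((hL ⟨(i : ℕ) - 2, by have := i.2; omega⟩).1 ⟨0, hd0⟩).2 c
        exact ⟨(⟨0, hd0⟩, b), by simp [G, h0, h1]; exact hb⟩
  -- pairwise bijectivity of the pairing, for i.val < j.val
  have hGbij : ∀ i j : Fin k, (i : ℕ) < (j : ℕ) →
      Bijective (fun p : Fin d × Fin d => (G i p, G j p)) := by
    intro i j hij
    rw [← Finite.injective_iff_bijective]
    intro p q hpq
    simp only [Prod.mk.injEq] at hpq
    by_cases h0 : (i : ℕ) = 0
    · have hGi : ∀ p : Fin d × Fin d, G i p = p.1 := fun p => by simp [G, h0]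
      rw [hGi, hGi] at hpq
      by_cases h1 : (j : ℕ) = 1
      · have hGj : ∀ p : Fin d × Fin d, G j p = p.2 := fun p => by
          simp [G, h1, show ¬((j : ℕ) = 0) by omega]
        rw [hGj, hGj] at hpq
        exact Prod.ext hpq.1 hpq.2
      · have hj2 : 2 ≤ (j : ℕ) := by omega
        set m : Fin (k - 2) := ⟨(j : ℕ) - 2, by have := j.2; omega⟩ with hm
        have hGj : ∀ p : Fin d × Fin d, G j p = L m p.1 p.2 := fun p => by
          simp [G, h1, show ¬((j : ℕ) = 0) by omega, hm]
        obtain ⟨hA, hB⟩ := hpq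
        rw [hGj, hGj, hA] at hB
        exact Prod.ext hA (((hL m).1 q.1).1 hB)
    · by_cases h1 : (i : ℕ) = 1
      · have hGi : ∀ p : Fin d × Fin d, G i p = p.2 := fun p => by simp [G, h0, h1]
        rw [hGi, hGi] at hpq
        have hj2 : 2 ≤ (j : ℕ) := by omega
        set m : Fin (k - 2) := ⟨(j : ℕ) - 2, by have := j.2; omega⟩ with hm
        have hGj : ∀ p : Fin d × Fin d, G j p = L m p.1 p.2 := fun p => by
          simp [G, show ¬((j : ℕ) = 0) by omega, show ¬((j : ℕ) = 1) by omega, hm]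
        obtain ⟨hA, hB⟩ := hpq
        rw [hGj, hGj, hA] at hB
        exact Prod.ext (((hL m).2 q.2).1 hB) hA
      · have hi2 : 2 ≤ (i : ℕ) := by omega
        have hj2 : 2 ≤ (j : ℕ) := by omega
        set m : Fin (k - 2) := ⟨(i : ℕ) - 2, by have := i.2; omega⟩ with hm
        set m' : Fin (k - 2) := ⟨(j : ℕ) - 2, by have := j.2; omega⟩ with hm'
        have hGi : ∀ p : Fin d × Fin d, G i p = L m p.1 p.2 := fun p => by
          simp [G, h0, h1, hm]
        have hGj : ∀ p : Fin d × Fin d, G j p = L m' p.1 p.2 := fun p => by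
          simp [G, show ¬((j : ℕ) = 0) by omega, show ¬((j : ℕ) = 1) by omega, hm']
        rw [hGi, hGi, hGj, hGj] at hpq
        have hmm : m ≠ m' := by
          simp only [hm, hm', ne_eq, Fin.mk.injEq]
          omega
        exact hLL m m' hmm (Prod.ext hpq.1 hpq.2)
  let F : Fin k → X → Fin d := fun i x => G i (e x)
  refine ⟨fun i => Set.range fun c => F i ⁻¹' {c}, ?_, ?_⟩
  · intro i
    exact isPartition_fibers ((hGsurj i).comp e.surjective)
  · have key : ∀ i j : Fin k, (i : ℕ) < (j : ℕ) →
        Complementary (Set.range fun c => F i ⁻¹' {c}) (Set.range fun c => F j ⁻¹' {c}) := by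
      intro i j hij
      apply complementary_fibers
      exact ((hGbij i j hij).comp e.bijective :)
    intro i j hij
    rcases lt_or_gt_of_ne (fun h : (i : ℕ) = (j : ℕ) => hij (Fin.ext h)) with h | h
    · exact key i j h
    · exact (key j i h).symm'

/-- For `d ≥ 2` and `k ≥ 2`, there exist `k` pairwise complementary partitions of a set
with `d²` elements if and only if there exist `k - 2` mutually orthogonal Latin squares
of order `d`.  Equivalently, there are `k` mutually complementary classical structures on
a set with `d²` elements in `Rel` iff there exist `k - 2` MOLS of order `d`. -/
theorem mutually_complementary_partitions_iff_mols {d k : ℕ} (hd : 2 ≤ d) (hk : 2 ≤ k)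
    {X : Type*} [Fintype X] (hX : Fintype.card X = d ^ 2) :
    (∃ π : Fin k → Set (Set X),
        (∀ i, IsPartition (π i)) ∧ ∀ i j, i ≠ j → Complementary (π i) (π j)) ↔
    (∃ L : Fin (k - 2) → Fin d → Fin d → Fin d,
        (∀ i, IsLatinSquare (L i)) ∧ ∀ i j, i ≠ j → OrthogonalLS (L i) (L j)) := by
  constructor
  · rintro ⟨π, h1, h2⟩
    rcases Nat.lt_or_ge k 3 with hk3 | hk3
    · exact ⟨fun m => absurd m.2 (by omega), fun i => absurd i.2 (by omega),
        fun i j _ => absurd i.2 (by omega)⟩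
    · exact mols_forward hd hk3 hX π h1 h2
  · rintro ⟨L, h1, h2⟩
    exact mols_backward hd hk hX L h1 h2
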